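/- Given L, r_min, M, δ > 0 with L < r_min, there exist unique G, H, q, p > 0 with q > p such that the Lennard-Jones force function F(r) = G/r^q - H/r^p satisfies: F(L) = 0, F attains its absolute minimum at r_min with F(r_min) = -M, and q - p = δ. -/

import Mathlib

open Real Set

private lemma lj_hasDerivAt (G H q p r : ℝ) (hr : 0 < r) :
    HasDerivAt (fun x : ℝ => G / x ^ q - H / x ^ p)
      (p * H * r ^ (-p - 1) - q * G * r ^ (-q - 1)) r := by
  have h1 : HasDerivAt (fun x : ℝ => x ^ (-q)) ((-q) * r ^ (-q - 1)) r :=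
    Real.hasDerivAt_rpow_const (Or.inl hr.ne')
  have h2 : HasDerivAt (fun x : ℝ => x ^ (-p)) ((-p) * r ^ (-p - 1)) r :=
    Real.hasDerivAt_rpow_const (Or.inl hr.ne')
  have h3 : HasDerivAt (fun x : ℝ => G * x ^ (-q) - H * x ^ (-p))
      (G * ((-q) * r ^ (-q - 1)) - H * ((-p) * r ^ (-p - 1))) r :=
    (h1.const_mul G).sub (h2.const_mul H)
  have heq : (fun x : ℝ => G / x ^ q - H / x ^ p) =ᶠ[nhds r]
      (fun x : ℝ => G * x ^ (-q) - H * x ^ (-p)) := by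
    filter_upwards [isOpen_Ioi.mem_nhds hr] with x hx
    rw [Real.rpow_neg (le_of_lt hx), Real.rpow_neg (le_of_lt hx)]
    ring
  have h4 := h3.congr_of_eventuallyEq heq
  exact h4.congr_deriv (by ring)

private lemma lj_hasDerivAt' (G H q p c r : ℝ) (hr : 0 < r)
    (hcrit : q * G = p * H * c ^ (q - p)) :
    HasDerivAt (fun x : ℝ => G / x ^ q - H / x ^ p)
      (p * H * r ^ (-q - 1) * (r ^ (q - p) - c ^ (q - p))) r := by
  have h := lj_hasDerivAt G H q p r hr
  convert h using 1
  have e1 : r ^ (-q - 1) * r ^ (q - p) = r ^ (-p - 1) := by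
    rw [← Real.rpow_add hr]; ring_nf
  rw [mul_sub, mul_assoc, mul_assoc, e1, hcrit]
  ring

private lemma lj_min (G H q p c : ℝ) (hH : 0 < H) (hp : 0 < p) (hpq : p < q)
    (hc : 0 < c) (hcrit : q * G = p * H * c ^ (q - p)) :
    ∀ r : ℝ, 0 < r → r ≠ c →
      G / c ^ q - H / c ^ p < G / r ^ q - H / r ^ p := by
  set F : ℝ → ℝ := fun x => G / x ^ q - H / x ^ p with hF
  have hderiv : ∀ r : ℝ, 0 < r → HasDerivAt F
      (p * H * r ^ (-q - 1) * (r ^ (q - p) - c ^ (q - p))) r :=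
    fun r hr => lj_hasDerivAt' G H q p c r hr hcrit
  have hqp : 0 < q - p := sub_pos.2 hpq
  have anti : StrictAntiOn F (Ioc 0 c) := by
    apply strictAntiOn_of_deriv_neg (convex_Ioc 0 c)
    · intro x hx
      exact ((hderiv x hx.1).continuousAt).continuousWithinAt
    · intro x hx
      rw [interior_Ioc] at hx
      rw [(hderiv x hx.1).deriv]
      apply mul_neg_of_pos_of_neg
      · exact mul_pos (mul_pos hp hH) (Real.rpow_pos_of_pos hx.1 _)
      · exact sub_neg.2 (Real.rpow_lt_rpow hx.1.le hx.2 hqp)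
  have mono : StrictMonoOn F (Ici c) := by
    apply strictMonoOn_of_deriv_pos (convex_Ici c)
    · intro x hx
      exact ((hderiv x (lt_of_lt_of_le hc hx)).continuousAt).continuousWithinAt
    · intro x hx
      rw [interior_Ici] at hx
      rw [(hderiv x (hc.trans hx)).deriv]
      apply mul_pos
      · exact mul_pos (mul_pos hp hH) (Real.rpow_pos_of_pos (hc.trans hx) _)
      · exact sub_pos.2 (Real.rpow_lt_rpow hc.le hx hqp)
  intro r hr hne
  rcases lt_or_gt_of_ne hne with h | h
  · exact anti ⟨hr, h.le⟩ ⟨hc, le_rfl⟩ h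
  · exact mono self_mem_Ici h.le h

theorem ljf_reparam_exists_unique (L rmin M δ : ℝ) (hL : 0 < L) (hrmin : 0 < rmin)
    (hM : 0 < M) (hδ : 0 < δ) (hLr : L < rmin) :
    ∃! GHqp : ℝ × ℝ × ℝ × ℝ,
      0 < GHqp.1 ∧ 0 < GHqp.2.1 ∧ 0 < GHqp.2.2.1 ∧ 0 < GHqp.2.2.2 ∧
      GHqp.2.2.2 < GHqp.2.2.1 ∧
      (let F : ℝ → ℝ := fun r => GHqp.1 / r ^ GHqp.2.2.1 - GHqp.2.1 / r ^ GHqp.2.2.2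
       F L = 0 ∧ F rmin = -M ∧ (∀ r : ℝ, 0 < r → F rmin ≤ F r) ∧
         (∀ r : ℝ, 0 < r → F r = F rmin → r = rmin) ∧
         GHqp.2.2.1 - GHqp.2.2.2 = δ) := by
  set B := L ^ δ with hB
  set A := rmin ^ δ with hA
  have hB0 : 0 < B := Real.rpow_pos_of_pos hL δ
  have hA0 : 0 < A := Real.rpow_pos_of_pos hrmin δ
  have hBA : B < A := Real.rpow_lt_rpow hL.le hLr hδ
  have hAB0 : 0 < A - B := sub_pos.2 hBA
  set p := δ * B / (A - B) with hpdef
  have hp : 0 < p := div_pos (mul_pos hδ hB0) hAB0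
  set q := p + δ with hqdef
  have hpq : p < q := lt_add_of_pos_right p hδ
  have hq : 0 < q := hp.trans hpq
  set H := M * rmin ^ q / (A - B) with hHdef
  have hH : 0 < H := div_pos (mul_pos hM (Real.rpow_pos_of_pos hrmin q)) hAB0
  set G := H * B with hGdef
  have hG : 0 < G := mul_pos hH hB0
  have hqB : q * B = p * A := by
    have : p * (A - B) = δ * B := by
      rw [hpdef]; field_simp
    nlinarith [this]
  have hcrit : q * G = p * H * rmin ^ (q - p) := by
    have hqpδ : q - p = δ := by rw [hqdef]; ring
    rw [hqpδ, ← hA, hGdef]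
    nlinarith [hqB]
  have hLq : L ^ q = L ^ p * B := by rw [hqdef, Real.rpow_add hL, hB]
  have hrq : rmin ^ q = rmin ^ p * A := by rw [hqdef, Real.rpow_add hrmin, hA]
  have hFL : G / L ^ q - H / L ^ p = 0 := by
    rw [hGdef, hLq]
    have h1 : L ^ p ≠ 0 := (Real.rpow_pos_of_pos hL p).ne'
    field_simp
    ring
  have hFm : G / rmin ^ q - H / rmin ^ p = -M := by
    have h1 : rmin ^ p ≠ 0 := (Real.rpow_pos_of_pos hrmin p).ne'
    have h2 : rmin ^ q ≠ 0 := (Real.rpow_pos_of_pos hrmin q).ne'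
    rw [hGdef, hHdef]
    rw [div_sub_div _ _ h2 h1, div_eq_iff (mul_ne_zero h2 h1)]
    rw [hrq]
    field_simp
    ring
  refine ⟨(G, H, q, p), ⟨hG, hH, hq, hp, hpq, hFL, hFm, ?_, ?_, ?_⟩, ?_⟩
  · -- global minimum
    intro r hr
    by_cases h : r = rmin
    · subst h; exact le_rfl
    · exact (lj_min G H q p rmin hH hp hpq hrmin hcrit r hr h).le
  · -- uniqueness of minimizer
    intro r hr heq
    by_contra hne
    exact absurd heq (lj_min G H q p rmin hH hp hpq hrmin hcrit r hr hne).ne'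
  · rw [hqdef]; ring
  · -- uniqueness of parameters
    rintro ⟨G', H', q', p'⟩ ⟨hG', hH', hq', hp', hpq', hFL', hFm', hmin', -, hδ'⟩
    simp only at hFL' hFm' hmin' hδ' hG' hH' hq' hp' hpq'
    have hq'def : q' = p' + δ := by linarith
    have hLp' : (0:ℝ) < L ^ p' := Real.rpow_pos_of_pos hL p'
    have hLq'e : L ^ q' = L ^ p' * B := by rw [hq'def, Real.rpow_add hL, hB]
    have hG'B : G' = H' * B := by
      have h1 := sub_eq_zero.mp hFL'
      rw [div_eq_div_iff (Real.rpow_pos_of_pos hL q').ne' hLp'.ne'] at h1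
      rw [hLq'e] at h1
      have h2 : G' * L ^ p' = H' * B * L ^ p' := by linarith [h1]; 
      exact mul_right_cancel₀ hLp'.ne' h2
    have hloc : IsLocalMin (fun x : ℝ => G' / x ^ q' - H' / x ^ p') rmin :=
      Filter.eventually_of_mem (isOpen_Ioi.mem_nhds hrmin) (fun x hx => hmin' x hx)
    have hder0 := hloc.hasDerivAt_eq_zero (lj_hasDerivAt G' H' q' p' rmin hrmin)
    have e1 : rmin ^ (-p' - 1) * rmin ^ (q' + 1) = rmin ^ (q' - p') := by
      rw [← Real.rpow_add hrmin]; ring_nf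
    have e2 : rmin ^ (-q' - 1) * rmin ^ (q' + 1) = 1 := by
      rw [← Real.rpow_add hrmin]
      have : (-q' - 1) + (q' + 1) = 0 := by ring
      rw [this, Real.rpow_zero]
    have hc' : q' * G' = p' * H' * rmin ^ (q' - p') := by
      have h3 := congrArg (· * rmin ^ (q' + 1)) hder0
      simp only [zero_mul, sub_mul] at h3
      rw [mul_assoc (p' * H'), mul_assoc (q' * G'), e1, e2] at h3
      linarith [h3]
    rw [hδ', ← hA] at hc'
    rw [hG'B] at hc'
    have h5 : q' * B * H' = p' * A * H' := by linear_combination hc'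
    have h4 : q' * B = p' * A := mul_right_cancel₀ hH'.ne' h5
    have hp'A : p' * (A - B) = δ * B := by
      rw [hq'def] at h4
      linear_combination (-1 : ℝ) * h4
    have hpp : p' = p := by
      rw [hpdef, eq_div_iff hAB0.ne']
      linarith [hp'A]
    have hqq : q' = q := by rw [hq'def, hqdef, hpp]
    have hHH : H' = H := by
      rw [hqq, hpp, hG'B] at hFm'
      have h1 : (0:ℝ) < rmin ^ p := Real.rpow_pos_of_pos hrmin p
      have h2 : (0:ℝ) < rmin ^ q := Real.rpow_pos_of_pos hrmin q
      rw [div_sub_div _ _ h2.ne' h1.ne', div_eq_iff (mul_ne_zero h2.ne' h1.ne')] at hFm'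
      have h6 : (H' * (A - B)) * rmin ^ p = (M * rmin ^ q) * rmin ^ p := by
        rw [hrq] at hFm' ⊢
        linear_combination (-1 : ℝ) * hFm'
      have h7 := mul_right_cancel₀ h1.ne' h6
      rw [hHdef, eq_div_iff hAB0.ne']
      linarith [h7]
    have hGG : G' = G := by rw [hG'B, hHH, hGdef]
    simp only [Prod.mk.injEq]
    exact ⟨hGG, hHH, hqq, hpp⟩
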